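/- The elementary cellular automaton with Wolfram number 9, i.e. the CA f on {0,1}^ℤ with f(x)_i = 1 if and only if (x_{i-1}, x_i, x_{i+1}) ∈ {(0,0,0), (0,1,1)}, is not von Neumann regular in End({0,1}^ℤ). -/

import Mathlib

/-- The shift map on the full shift `A^ℤ`: `σ(x)_i = x_{i+1}`. -/
def shiftMap {A : Type*} (x : ℤ → A) : ℤ → A := fun i => x (i + 1)

/-- A cellular automaton on the full shift `A^ℤ` (with the product topology,
`A` discrete): a continuous map commuting with the shift. -/
def IsCA {A : Type*} [TopologicalSpace A] (f : (ℤ → A) → (ℤ → A)) : Prop :=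
  Continuous f ∧ ∀ x, f (shiftMap x) = shiftMap (f x)

/-- `f` is von Neumann regular in the monoid `End(A^ℤ)` of cellular automata:
there is a CA `h` with `f ∘ h ∘ f = f` and `h ∘ f ∘ h = h`. -/
def IsRegularCA {A : Type*} [TopologicalSpace A] (f : (ℤ → A) → (ℤ → A)) : Prop :=
  ∃ h : (ℤ → A) → (ℤ → A), IsCA h ∧ f ∘ h ∘ f = f ∧ h ∘ f ∘ h = h

lemma shift_iter {A : Type*} (w : ℤ → A) (n : ℕ) (i : ℤ) :
    (shiftMap^[n]) w i = w (i + n) := by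
  induction n generalizing i with
  | zero => simp
  | succ n ih =>
    rw [Function.iterate_succ_apply']
    show (shiftMap^[n]) w (i + 1) = w (i + ((n : ℤ) + 1))
    rw [ih]
    congr 1
    push_cast
    ring_nf

lemma h_shift_iter {A : Type*} (h : (ℤ → A) → (ℤ → A))
    (hc : ∀ x, h (shiftMap x) = shiftMap (h x)) (w : ℤ → A) (n : ℕ) :
    h ((shiftMap^[n]) w) = (shiftMap^[n]) (h w) := by
  induction n with
  | zero => simp
  | succ n ih => rw [Function.iterate_succ_apply', Function.iterate_succ_apply', hc, ih]

/-- The elementary cellular automaton with Wolfram number 9 is not von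
Neumann regular in End({0,1}^ℤ). Here 1 is represented by `true`. -/
theorem stmt10 (f : (ℤ → Bool) → (ℤ → Bool))
    (hf : ∀ (x : ℤ → Bool) (i : ℤ), f x i = true ↔
      (x (i - 1), x i, x (i + 1)) = (false, false, false) ∨
      (x (i - 1), x i, x (i + 1)) = (false, true, true)) :
    ¬ IsRegularCA f := by
  rintro ⟨h, ⟨hcont, hcomm⟩, hfhf, -⟩
  -- explicit configuration x with y := f x = ...000110000...
  set x : ℤ → Bool := fun i => if i ≤ -2 then true else if i ≤ 2 then false
      else decide (i % 2 = 1) with hxdef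
  have xval : ∀ j : ℤ, x j = true ↔ (j ≤ -2 ∨ (3 ≤ j ∧ j % 2 = 1)) := by
    intro j
    simp only [hxdef]
    split_ifs with h1 h2 <;> simp <;> omega
  set y : ℤ → Bool := f x with hydef
  have hy0 : y 0 = true := by
    apply (hf x 0).mpr
    left
    have e1 : x (0 - 1) = false := by
      rw [Bool.eq_false_iff]; rw [Ne, xval]; omega
    have e2 : x 0 = false := by
      rw [Bool.eq_false_iff]; rw [Ne, xval]; omega
    have e3 : x (0 + 1) = false := by
      rw [Bool.eq_false_iff]; rw [Ne, xval]; omega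
    rw [e1, e2, e3]
  have hy1 : y 1 = true := by
    apply (hf x 1).mpr
    left
    have e1 : x (1 - 1) = false := by
      rw [Bool.eq_false_iff]; rw [Ne, xval]; omega
    have e2 : x 1 = false := by
      rw [Bool.eq_false_iff]; rw [Ne, xval]; omega
    have e3 : x (1 + 1) = false := by
      rw [Bool.eq_false_iff]; rw [Ne, xval]; omega
    rw [e1, e2, e3]
  have hyF : ∀ i : ℤ, i ≠ 0 → i ≠ 1 → y i = false := by
    intro i h0 h1
    rw [Bool.eq_false_iff]
    intro hT
    rcases (hf x i).mp hT with hc | hc <;>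
    · rw [Prod.ext_iff, Prod.ext_iff] at hc
      obtain ⟨a, b, c⟩ := hc
      simp only [Bool.eq_false_iff, Ne, xval, Bool.true_eq, Bool.false_eq] at a b c
      omega
  -- z := h y is a preimage of y
  set z : ℤ → Bool := h y with hzdef
  have hfz : f z = y := congrFun hfhf x
  -- z 0 = z 1 = z 2 = false
  have key01 : z 0 = false ∧ z 1 = false ∧ z 2 = false := by
    have t0 : f z 0 = true := by rw [hfz]; exact hy0
    have t1 : f z 1 = true := by rw [hfz]; exact hy1
    rcases (hf z 0).mp t0 with hc | hc <;> rcases (hf z 1).mp t1 with hd | hd <;>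
      · rw [Prod.ext_iff, Prod.ext_iff] at hc hd
        norm_num at hc hd
        simp_all
  -- no two consecutive trues in z beyond position 2
  have C : ∀ n : ℤ, 2 ≤ n → ¬(z n = true ∧ z (n + 1) = true) := by
    intro n hn
    refine Int.le_induction (motive := fun n _ => ¬(z n = true ∧ z (n + 1) = true)) ?_ ?_ n hn
    · rintro ⟨hzt, -⟩; rw [key01.2.2] at hzt; exact Bool.false_ne_true hzt
    · intro n hn ih
      rintro ⟨hz1, hz2⟩
      have hzn : z n = false := by
        rcases Bool.eq_false_or_eq_true (z n) with hh | hh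
        · exact absurd ⟨hh, hz1⟩ ih
        · exact hh
      have : f z (n + 1) = true := by
        apply (hf z (n + 1)).mpr
        right
        have e1 : n + 1 - 1 = n := by ring
        rw [e1, hzn, hz1, hz2]
      rw [hfz] at this
      rw [hyF (n + 1) (by omega) (by omega)] at this
      exact Bool.false_ne_true this
  -- h of the all-false point is the all-true point
  set u : ℤ → Bool := h (fun _ => false) with hudef
  have hsu : shiftMap u = u := by
    rw [hudef, ← hcomm]
    rfl
  have huconst : ∀ i : ℤ, u i = u 0 := by
    have step : ∀ i : ℤ, u (i + 1) = u i := fun i => congrFun hsu i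
    intro i
    induction i using Int.induction_on with
    | zero => rfl
    | succ k ih => rw [step (k : ℤ)]; exact ih
    | pred k ih =>
      have st := step (-(k : ℤ) - 1)
      have e : -(k : ℤ) - 1 + 1 = -(k : ℤ) := by ring
      rw [e] at st
      rw [← st]
      exact ih
  have hall1 : f (fun _ => true : ℤ → Bool) = (fun _ => false) := by
    funext i
    rw [Bool.eq_false_iff]
    intro hT
    rcases (hf _ i).mp hT with hc | hc <;> simp at hc
  have hfu : f u = (fun _ => false) := by
    have := congrFun hfhf (fun _ => true : ℤ → Bool)
    simpa [hall1] using this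
  have hu0 : u 0 = true := by
    rcases Bool.eq_false_or_eq_true (u 0) with hh | hh
    · exact hh
    · exfalso
      have hfalse : u = (fun _ => false) := by
        funext i; rw [huconst i, hh]
      have : f u 0 = true := by
        apply (hf u 0).mpr
        left
        rw [hfalse]
      rw [hfu] at this
      exact Bool.false_ne_true this
  -- σ^n y → all-false, so z n = (σ^n z) 0 = h(σ^n y) 0 → u 0 = true eventually
  have htend : Filter.Tendsto (fun n : ℕ => (shiftMap^[n]) y) Filter.atTop
      (nhds (fun _ => false)) := by
    rw [tendsto_pi_nhds]
    intro i
    apply Filter.Tendsto.congr' _ (tendsto_const_nhds (x := false))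
    rw [Filter.EventuallyEq, Filter.eventually_atTop]
    refine ⟨(2 - i).toNat, fun n hn => ?_⟩
    rw [shift_iter]
    have h2 : 2 ≤ i + (n : ℤ) := by
      have := Int.self_le_toNat (2 - i)
      omega
    exact (hyF (i + n) (by omega) (by omega)).symm
  have htend2 : Filter.Tendsto (fun n : ℕ => h ((shiftMap^[n]) y) 0) Filter.atTop
      (nhds (u 0)) :=
    ((continuous_apply (0 : ℤ)).tendsto u).comp (hcont.tendsto _ |>.comp htend)
  rw [hu0] at htend2
  have hev : ∀ᶠ n : ℕ in Filter.atTop, h ((shiftMap^[n]) y) 0 ∈ ({true} : Set Bool) :=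
    htend2 ((isOpen_discrete _).mem_nhds (Set.mem_singleton _))
  simp only [Set.mem_singleton_iff] at hev
  rw [Filter.eventually_atTop] at hev
  obtain ⟨N, hN⟩ := hev
  have hzn : ∀ n : ℕ, N ≤ n → z (n : ℤ) = true := by
    intro n hn
    have := hN n hn
    rw [h_shift_iter h hcomm, shift_iter] at this
    simpa using this
  apply C ((N : ℤ) + 2) (by omega)
  constructor
  · have := hzn (N + 2) (by omega)
    push_cast at this
    exact this
  · have := hzn (N + 3) (by omega)
    have e : ((N : ℤ) + 2) + 1 = ((N + 3 : ℕ) : ℤ) := by push_cast; ring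
    rw [e]
    exact this
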